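/- If there exists x ∈ X with b − Ax ∈ ri K (Slater's condition, where ri denotes relative interior), then the conic system P = {x : Ax ≤_K b} is well-behaved. -/

import Mathlib

open scoped RealInnerProductSpace

noncomputable section

/-- The dual cone of a set `K` in a real inner product space. -/
def dualConeSet {Y : Type*} [NormedAddCommGroup Y] [InnerProductSpace ℝ Y] (K : Set Y) : Set Y :=
  {y | ∀ x ∈ K, 0 ≤ ⟪y, x⟫}

/-- The conic system `P = {x | Ax ≤_K b}` is well-behaved. -/
def WellBehavedSystem {X Y : Type*}
    [NormedAddCommGroup X] [InnerProductSpace ℝ X] [FiniteDimensional ℝ X]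
    [NormedAddCommGroup Y] [InnerProductSpace ℝ Y] [FiniteDimensional ℝ Y]
    (A : X →ₗ[ℝ] Y) (b : Y) (K : Set Y) : Prop :=
  ∀ (c : X) (v : ℝ), IsLUB {r : ℝ | ∃ x : X, b - A x ∈ K ∧ r = ⟪c, x⟫} v →
    ∃ y ∈ dualConeSet K, LinearMap.adjoint A y = c ∧ ⟪b, y⟫ = v

private lemma aux_nonpos_of_mul_le {r B : ℝ} (h : ∀ t : ℝ, 0 ≤ t → t * r ≤ B) : r ≤ 0 := by
  by_contra hr
  push_neg at hr
  have hB : 0 ≤ B := by simpa using h 0 le_rfl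
  have h2 := h ((B + 1) / r) (by positivity)
  rw [div_mul_cancel₀ _ (ne_of_gt hr)] at h2
  linarith

set_option maxHeartbeats 1000000 in
/-- if Slater's condition holds, i.e. there is `x` with `b - A x` in the relative
interior of `K`, then the conic system `P = {x | Ax ≤_K b}` is well-behaved. -/
theorem wellBehaved_of_slater
    {X Y : Type*}
    [NormedAddCommGroup X] [InnerProductSpace ℝ X] [FiniteDimensional ℝ X]
    [NormedAddCommGroup Y] [InnerProductSpace ℝ Y] [FiniteDimensional ℝ Y]
    (A : X →ₗ[ℝ] Y) (b : Y) (K : Set Y)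
    (hKclosed : IsClosed K) (hKconv : Convex ℝ K)
    (hKcone : ∀ (t : ℝ), 0 ≤ t → ∀ x ∈ K, t • x ∈ K)
    (hSlater : ∃ x : X, b - A x ∈ intrinsicInterior ℝ K) :
    WellBehavedSystem A b K := by
  classical
  obtain ⟨x₀, hx₀⟩ := hSlater
  have hbK : b - A x₀ ∈ K := intrinsicInterior_subset hx₀
  have hK0 : (0 : Y) ∈ K := by simpa using hKcone 0 le_rfl _ hbK
  intro c v hv
  set M : Submodule ℝ Y := Submodule.span ℝ K ⊔ LinearMap.range A with hMdef
  have hKM : ∀ k ∈ K, k ∈ M := fun k hk => Submodule.mem_sup_left (Submodule.subset_span hk)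
  have hAM : ∀ x : X, A x ∈ M := fun x => Submodule.mem_sup_right ⟨x, rfl⟩
  have hbM : b ∈ M := by
    have := M.add_mem (hKM _ hbK) (hAM x₀); simpa using this
  -- the convex set to be separated from `(0, v)`
  set C : Set (Y × ℝ) :=
    {q | ∃ x : X, ∃ k ∈ K, ∃ p ∈ Mᗮ, q.1 = b - A x - k + p ∧ q.2 ≤ ⟪c, x⟫} with hCdef
  have hCconv : Convex ℝ C := by
    rintro ⟨u, s⟩ ⟨x, k, hk, p, hp, hu, hs⟩ ⟨u', s'⟩ ⟨x', k', hk', p', hp', hu', hs'⟩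
      a a' ha ha' hab
    simp only at hu hs hu' hs'
    refine ⟨a • x + a' • x', a • k + a' • k', hKconv hk hk' ha ha' hab,
      a • p + a' • p', Mᗮ.add_mem (Mᗮ.smul_mem _ hp) (Mᗮ.smul_mem _ hp'), ?_, ?_⟩
    · show a • u + a' • u' = _
      rw [hu, hu']
      have hb' : b = a • b + a' • b := by rw [← add_smul, hab, one_smul]
      rw [map_add, map_smul, map_smul]
      nth_rewrite 3 [hb']
      module
    · show a • s + a' • s' ≤ _
      have h1 : ⟪c, a • x + a' • x'⟫ = a * ⟪c, x⟫ + a' * ⟪c, x'⟫ := by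
        rw [inner_add_right, real_inner_smul_right, real_inner_smul_right]
      have h2 : a * s ≤ a * ⟪c, x⟫ := mul_le_mul_of_nonneg_left hs ha
      have h3 : a' * s' ≤ a' * ⟪c, x'⟫ := mul_le_mul_of_nonneg_left hs' ha'
      simp only [smul_eq_mul]
      linarith
  -- a ball in the affine span of `K` around `b - A x₀` is contained in `K`
  obtain ⟨q0, hq0int, hq0eq⟩ := hx₀
  obtain ⟨ε, hε, hball⟩ := Metric.mem_nhds_iff.mp (mem_interior_iff_mem_nhds.mp hq0int)
  have hKball : ∀ w : Y, w ∈ Submodule.span ℝ K → ‖w‖ < ε → (b - A x₀) - w ∈ K := by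
    intro w hw hwε
    have hmem : (b - A x₀) - w ∈ affineSpan ℝ K := by
      have h1 : b - A x₀ ∈ affineSpan ℝ K := subset_affineSpan ℝ K hbK
      have hdir : -w ∈ (affineSpan ℝ K).direction := by
        rw [direction_affineSpan]
        refine Submodule.neg_mem _ ?_
        refine Submodule.span_le.mpr (fun k hk => ?_) hw
        simpa using vsub_mem_vectorSpan ℝ hk hK0
      have := AffineSubspace.vadd_mem_of_mem_direction hdir h1
      simpa [sub_eq_add_neg, add_comm] using this
    have hmem2 : (⟨(b - A x₀) - w, hmem⟩ : affineSpan ℝ K) ∈ Metric.ball q0 ε := by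
      rw [Metric.mem_ball, Subtype.dist_eq, hq0eq]
      simpa [dist_eq_norm] using hwε
    exact hball hmem2
  -- a continuous linear right inverse for `(w, z, p) ↦ w + (A z + p)`
  set T : ((Submodule.span ℝ K) × (X × Mᗮ)) →ₗ[ℝ] Y :=
    (Submodule.span ℝ K).subtype.coprod (A.coprod Mᗮ.subtype) with hTdef
  have hTsurj : LinearMap.range T = ⊤ := by
    rw [hTdef, LinearMap.range_coprod, LinearMap.range_coprod, Submodule.range_subtype,
      Submodule.range_subtype, ← sup_assoc, ← hMdef]
    exact Submodule.sup_orthogonal_of_hasOrthogonalProjection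
  obtain ⟨σ, hσ⟩ := T.exists_rightInverse_of_surjective hTsurj
  have hσcont : Continuous σ := σ.continuous_of_finiteDimensional
  set t₀ : ℝ := ⟪c, x₀⟫ - 1 with ht₀def
  -- a small ball of "good" points
  have hopen : IsOpen {u : Y | ‖((σ u).1 : Y)‖ < ε ∧ |⟪c, (σ u).2.1⟫| < 1} := by
    have hc1 : Continuous fun u : Y => ‖((σ u).1 : Y)‖ :=
      (continuous_subtype_val.comp (continuous_fst.comp hσcont)).norm
    have hc2 : Continuous fun u : Y => |⟪c, (σ u).2.1⟫| :=
      (Continuous.inner continuous_const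
        ((continuous_fst.comp continuous_snd).comp hσcont)).abs
    exact IsOpen.inter (isOpen_lt hc1 continuous_const) (isOpen_lt hc2 continuous_const)
  have h0good : (0 : Y) ∈ {u : Y | ‖((σ u).1 : Y)‖ < ε ∧ |⟪c, (σ u).2.1⟫| < 1} := by
    simp [map_zero σ, hε]
  obtain ⟨δ, hδ, hδsub⟩ := Metric.isOpen_iff.mp hopen 0 h0good
  -- the open set `U` is contained in `C`
  have hUC : Metric.ball (0 : Y) δ ×ˢ Set.Iio t₀ ⊆ C := by
    rintro ⟨u, s⟩ ⟨hu, hs⟩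
    obtain ⟨hw, hz⟩ := hδsub hu
    have hdecomp : u = ((σ u).1 : Y) + (A ((σ u).2.1) + ((σ u).2.2 : Y)) := by
      have h := LinearMap.congr_fun hσ u
      simpa [hTdef, LinearMap.coprod_apply] using h.symm
    refine ⟨x₀ - (σ u).2.1, (b - A x₀) - ((σ u).1 : Y), hKball _ (σ u).1.2 hw,
      ((σ u).2.2 : Y), (σ u).2.2.2, ?_, ?_⟩
    · show u = _
      rw [map_sub]
      conv_lhs => rw [hdecomp]
      abel
    · show s ≤ _
      have h1 : ⟪c, x₀ - (σ u).2.1⟫ = ⟪c, x₀⟫ - ⟪c, (σ u).2.1⟫ := inner_sub_right c _ _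
      have h2 := (abs_lt.mp hz).2
      have h3 : s < t₀ := hs
      rw [ht₀def] at h3
      linarith
  have hUopen : IsOpen (Metric.ball (0 : Y) δ ×ˢ Set.Iio t₀) :=
    Metric.isOpen_ball.prod isOpen_Iio
  have hUint : Metric.ball (0 : Y) δ ×ˢ Set.Iio t₀ ⊆ interior C :=
    interior_maximal hUC hUopen
  -- `(0, v)` is not in the interior of `C`
  have hpnot : ((0 : Y), v) ∉ interior C := by
    intro hmem
    obtain ⟨ρ, hρ, hball2⟩ := Metric.isOpen_iff.mp isOpen_interior _ hmem
    have hmemball : (((0 : Y), v + ρ / 2) : Y × ℝ) ∈ Metric.ball (((0 : Y), v) : Y × ℝ) ρ := by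
      rw [Metric.mem_ball, Prod.dist_eq]
      simp only [dist_self, Real.dist_eq]
      rw [max_lt_iff]
      constructor
      · exact hρ
      · rw [add_sub_cancel_left, abs_of_pos (by linarith)]; linarith
    obtain ⟨x, k, hk, p, hp, h1, h2⟩ := interior_subset (hball2 hmemball)
    simp only at h1 h2
    -- from `0 = (b - A x - k) + p` with the first summand in `M` and `p ∈ Mᗮ`
    have hmM : b - A x - k ∈ M := M.sub_mem (M.sub_mem hbM (hAM x)) (hKM _ hk)
    have hinner : ⟪b - A x - k, p⟫ = 0 := hp _ hmM
    have hpm : b - A x - k = -p := add_eq_zero_iff_eq_neg.mp h1.symm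
    rw [hpm, inner_neg_left, neg_eq_zero] at hinner
    have hzero : b - A x - k = 0 := by
      rw [← inner_self_eq_zero (𝕜 := ℝ), hpm, inner_neg_neg]
      exact hinner
    have hfeas : b - A x ∈ K := by
      rw [sub_eq_zero] at hzero
      rw [hzero]; exact hk
    have hle : ⟪c, x⟫ ≤ v := hv.1 ⟨x, hfeas, rfl⟩
    linarith
  -- separation
  obtain ⟨f, hf⟩ := geometric_hahn_banach_open_point hCconv.interior isOpen_interior hpnot
  have hq₁int : (((0 : Y), t₀ - 1) : Y × ℝ) ∈ interior C :=
    hUint ⟨Metric.mem_ball_self hδ, by simp⟩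
  -- extend the strict inequality on the interior to a weak one on `C`
  have hfC : ∀ q ∈ C, f q ≤ f ((0 : Y), v) := by
    intro q hq
    by_contra hgt
    push_neg at hgt
    set q₁ : Y × ℝ := ((0 : Y), t₀ - 1) with hq₁def
    have key : ∀ t : ℝ, t ∈ Set.Ioc (0 : ℝ) 1 → f (q + t • (q₁ - q)) < f ((0 : Y), v) :=
      fun t ht => hf _ (hCconv.add_smul_sub_mem_interior hq hq₁int ht)
    have hval : ∀ t : ℝ, f (q + t • (q₁ - q)) = f q - t * (f q - f q₁) := by
      intro t
      rw [map_add, map_smul, map_sub]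
      simp only [smul_eq_mul]
      ring
    have h1 := key 1 ⟨one_pos, le_rfl⟩
    rw [hval] at h1
    have hd : 0 < f q - f q₁ := by linarith
    have ht2 : (f q - f ((0 : Y), v)) / (2 * (f q - f q₁)) ∈ Set.Ioc (0 : ℝ) 1 := by
      constructor
      · exact div_pos (by linarith) (by linarith)
      · rw [div_le_one (by linarith)]; linarith
    have h2 := key _ ht2
    rw [hval] at h2
    have h3 : (f q - f ((0 : Y), v)) / (2 * (f q - f q₁)) * (f q - f q₁)
        = (f q - f ((0 : Y), v)) / 2 := by
      field_simp
    rw [h3] at h2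
    linarith
  -- represent `f` as `(u, t) ↦ ⟪y₀, u⟫ + t * γ`
  set γ : ℝ := f ((0 : Y), 1) with hγdef
  set g : Y →L[ℝ] ℝ := f.comp (ContinuousLinearMap.inl ℝ Y ℝ) with hgdef
  set y₀ : Y := (InnerProductSpace.toDual ℝ Y).symm g with hy₀def
  have hy₀ : ∀ u : Y, ⟪y₀, u⟫ = f (u, 0) := by
    intro u
    rw [hy₀def, InnerProductSpace.toDual_symm_apply]
    rfl
  have hsplit : ∀ (u : Y) (t : ℝ), f (u, t) = ⟪y₀, u⟫ + t * γ := by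
    intro u t
    have hdecomp : ((u, t) : Y × ℝ) = ((u, 0) : Y × ℝ) + t • (((0 : Y), (1 : ℝ)) : Y × ℝ) := by
      simp [Prod.ext_iff]
    rw [hdecomp, map_add, map_smul, hy₀]
    simp [hγdef]
  -- the main inequality
  have Hineq : ∀ (x : X) (k : Y), k ∈ K → ∀ s : ℝ, s ≤ ⟪c, x⟫ →
      ⟪y₀, b - A x - k⟫ + s * γ ≤ v * γ := by
    intro x k hk s hs
    have hmem : ((b - A x - k, s) : Y × ℝ) ∈ C :=
      ⟨x, k, hk, 0, Mᗮ.zero_mem, by simp, hs⟩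
    have h2 := hfC _ hmem
    rw [hsplit, hsplit] at h2
    simpa [inner_zero_right] using h2
  -- basic consequences
  have h00 : ⟪y₀, b⟫ ≤ v * γ := by
    have := Hineq 0 0 hK0 0 (by simp)
    simpa using this
  have hγnn : 0 ≤ γ := by
    have h := aux_nonpos_of_mul_le (r := -γ) (B := v * γ - ⟪y₀, b⟫) ?_
    · linarith
    · intro t ht
      have := Hineq 0 0 hK0 (-t) (by simpa using neg_nonpos_of_nonneg ht)
      simp only [map_zero, sub_zero] at this
      nlinarith [this]
  have hdual : ∀ k ∈ K, 0 ≤ ⟪y₀, k⟫ := by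
    intro k hk
    have h := aux_nonpos_of_mul_le (r := -⟪y₀, k⟫) (B := v * γ - ⟪y₀, b⟫) ?_
    · linarith
    · intro t ht
      have h2 := Hineq 0 (t • k) (hKcone t ht k hk) 0 (by simp)
      rw [inner_sub_right, real_inner_smul_right] at h2
      simp only [map_zero, sub_zero, zero_mul, add_zero] at h2
      nlinarith [h2]
  -- the adjoint identity
  have hadj : LinearMap.adjoint A y₀ = γ • c := by
    set w : X := γ • c - LinearMap.adjoint A y₀ with hwdef
    have hw0 : ⟪w, w⟫ ≤ 0 := by
      refine aux_nonpos_of_mul_le (B := v * γ - ⟪y₀, b⟫) ?_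
      intro t ht
      have h2 := Hineq (t • w) 0 hK0 ⟪c, t • w⟫ le_rfl
      rw [sub_zero, inner_sub_right, map_smul, real_inner_smul_right,
        real_inner_smul_right] at h2
      have hA : ⟪y₀, A w⟫ = ⟪LinearMap.adjoint A y₀, w⟫ :=
        (LinearMap.adjoint_inner_left A w y₀).symm
      rw [hA] at h2
      have hww : ⟪w, w⟫ = γ * ⟪c, w⟫ - ⟪LinearMap.adjoint A y₀, w⟫ := by
        rw [hwdef, inner_sub_left, real_inner_smul_left]
      nlinarith [h2]
    have : w = 0 := by
      rw [← inner_self_eq_zero (𝕜 := ℝ)]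
      exact le_antisymm hw0 real_inner_self_nonneg
    rw [hwdef] at this
    exact (sub_eq_zero.mp this).symm
  -- `γ` is positive
  have hγne : γ ≠ 0 := by
    intro hγ0
    have h := hf _ hq₁int
    rw [hsplit, hsplit] at h
    rw [hγ0] at h
    simp at h
  have hγpos : 0 < γ := lt_of_le_of_ne hγnn (Ne.symm hγne)
  -- assemble the dual solution
  refine ⟨γ⁻¹ • y₀, ?_, ?_, ?_⟩
  · intro k hk
    rw [real_inner_smul_left]
    exact mul_nonneg (inv_nonneg.mpr hγpos.le) (hdual k hk)
  · rw [map_smul, hadj, smul_smul, inv_mul_cancel₀ hγne, one_smul]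
  · have hle : γ⁻¹ * ⟪b, y₀⟫ ≤ v := by
      rw [real_inner_comm] at h00
      rw [inv_mul_le_iff₀ hγpos]
      nlinarith [h00]
    have hge : v ≤ γ⁻¹ * ⟪b, y₀⟫ := by
      refine hv.2 ?_
      rintro r ⟨x, hxK, rfl⟩
      have h1 : 0 ≤ ⟪y₀, b - A x⟫ := hdual _ hxK
      have h2 : ⟪y₀, A x⟫ = γ * ⟪c, x⟫ := by
        rw [← LinearMap.adjoint_inner_left, hadj, real_inner_smul_left]
      rw [inner_sub_right, h2] at h1
      rw [le_inv_mul_iff₀ hγpos, real_inner_comm y₀ b]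
      linarith [h1]
    rw [real_inner_smul_right]
    linarith
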